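/- Let K be a field, let x_1,…,x_m be pairwise distinct nonzero elements of K, and let x_0, u_0, u_1, …, u_m ∈ K satisfy ∏_{s=0}^{m} x_s = ∏_{s=0}^{m} u_s. Then for every z ∈ K: ∏_{s=0}^{m}(1 − z·u_s) − ∏_{s=0}^{m}(1 − z·x_s) = z·Σ_{i=1}^{m} x_i^{-1}·( ∏_{s=0}^{m}(x_i − u_s) )·( ∏_{1≤s≤m, s≠i}(x_i − x_s) )^{-1}·∏_{1≤s≤m, s≠i}(1 − z·x_s). -/

import Mathlib

open Polynomial Finset

/-- The Lagrange-interpolation identity (proof of Theorem 3.3 of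
Bergeron–Garsia, formula 3.46): if `x_1, …, x_m` are pairwise distinct and
nonzero and `x_0 x_1 ⋯ x_m = u_0 u_1 ⋯ u_m`, then for every `z`,
`∏_{s=0}^m (1 - z u_s) - ∏_{s=0}^m (1 - z x_s)
  = z ∑_{i=1}^m x_i⁻¹ (∏_{s=0}^m (x_i - u_s)) (∏_{s≠i} (x_i - x_s))⁻¹
      ∏_{s≠i} (1 - z x_s)`. -/
theorem statement16 {K : Type*} [Field K] (m : ℕ)
    (x₀ u₀ : K) (x u : Fin m → K)
    (hxinj : Function.Injective x) (hx0 : ∀ i, x i ≠ 0)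
    (hprod : x₀ * ∏ s, x s = u₀ * ∏ s, u s) (z : K) :
    (1 - z * u₀) * ∏ s, (1 - z * u s) - (1 - z * x₀) * ∏ s, (1 - z * x s) =
      z * ∑ i, (x i)⁻¹ * ((x i - u₀) * ∏ s, (x i - u s)) *
        (∏ s ∈ Finset.univ.erase i, (x i - x s))⁻¹ *
        ∏ s ∈ Finset.univ.erase i, (1 - z * x s) := by
  classical
  rcases m with _ | n
  · simp only [Finset.univ_eq_empty, Finset.prod_empty, Finset.sum_empty, mul_one,
      mul_zero] at hprod ⊢
    linear_combination z * hprod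
  set c : Fin (n + 1) → K := fun i => (x i)⁻¹ * ((x i - u₀) * ∏ s, (x i - u s)) *
      (∏ s ∈ Finset.univ.erase i, (x i - x s))⁻¹ with hc
  set P : K[X] := (1 - C u₀ * X) * ∏ s, (1 - C (u s) * X)
      - (1 - C x₀ * X) * ∏ s, (1 - C (x s) * X)
      - X * ∑ i, C (c i) * ∏ s ∈ Finset.univ.erase i, (1 - C (x s) * X) with hPdef
  have hfac : ∀ a : K, natDegree (1 - C a * X : K[X]) ≤ 1 := by
    intro a; compute_degree
  have hprodned : ∀ (t : Finset (Fin (n + 1))) (a : Fin (n + 1) → K),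
      natDegree (∏ s ∈ t, (1 - C (a s) * X)) ≤ t.card := by
    intro t a
    refine (natDegree_prod_le _ _).trans ?_
    simpa using Finset.sum_le_card_nsmul t _ 1 fun s _ => hfac (a s)
  have hcard_erase : ∀ i : Fin (n + 1), (Finset.univ.erase i).card = n := by
    intro i; simp [Finset.card_erase_of_mem]
  -- degree of the sum term
  have hsumned : natDegree (X * ∑ i, C (c i) *
      ∏ s ∈ Finset.univ.erase i, (1 - C (x s) * X) : K[X]) ≤ n + 1 := by
    refine natDegree_mul_le.trans ?_
    have h1 : natDegree (∑ i, C (c i) *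
        ∏ s ∈ Finset.univ.erase i, (1 - C (x s) * X) : K[X]) ≤ n := by
      refine natDegree_sum_le_of_forall_le (n := n) _ _ fun i _ => ?_
      refine natDegree_mul_le.trans ?_
      have h2 := hprodned (Finset.univ.erase i) x
      rw [hcard_erase i] at h2
      simpa using h2
    have := add_le_add (natDegree_X_le (R := K)) h1
    omega
  -- the key coefficient computation
  have key : ∀ (a₀ : K) (a : Fin (n + 1) → K),
      ((1 - C a₀ * X) * ∏ s, (1 - C (a s) * X)).coeff (n + 2)
        = (-1) ^ (n + 2) * (a₀ * ∏ s, a s) := by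
    intro a₀ a
    set v : Fin (n + 2) → K := Fin.cons a₀ a with hv
    have h1 : (∏ s : Fin (n + 2), (1 - C (v s) * X))
        = (1 - C a₀ * X) * ∏ s, (1 - C (a s) * X) := by
      simp [Fin.prod_univ_succ, hv]
    have h2 := coeff_prod_of_natDegree_le (s := (Finset.univ : Finset (Fin (n + 2))))
      (fun s => 1 - C (v s) * X) 1 (fun p _ => hfac _)
    simp only [Finset.card_univ, Fintype.card_fin, mul_one] at h2
    rw [← h1, h2]
    have h4 : ∀ s : Fin (n + 2), (1 - C (v s) * X : K[X]).coeff 1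
        = (-1) * v s := by
      intro s
      simp only [coeff_sub, coeff_one, coeff_C_mul, coeff_X_one]
      norm_num
    rw [Finset.prod_congr rfl fun s _ => h4 s, Finset.prod_mul_distrib,
      Finset.prod_const, Finset.card_univ, Fintype.card_fin]
    rw [hv, Fin.prod_cons]
  have hmulned : ∀ (a₀ : K) (a : Fin (n + 1) → K),
      natDegree ((1 - C a₀ * X) * ∏ s, (1 - C (a s) * X)) ≤ n + 2 := by
    intro a₀ a
    refine natDegree_mul_le.trans ?_
    have h2 : natDegree (∏ s, (1 - C (a s) * X)) ≤ n + 1 := by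
      simpa using hprodned Finset.univ a
    have h3 := hfac a₀
    omega
  have hdeg1 : natDegree P ≤ n + 2 := by
    refine (natDegree_sub_le _ _).trans (max_le ?_ (hsumned.trans (Nat.le_succ _)))
    exact (natDegree_sub_le _ _).trans (max_le (hmulned _ _) (hmulned _ _))
  have hcoeff : P.coeff (n + 2) = 0 := by
    have hz : (X * ∑ i, C (c i) *
        ∏ s ∈ Finset.univ.erase i, (1 - C (x s) * X) : K[X]).coeff (n + 2) = 0 :=
      coeff_eq_zero_of_natDegree_lt (lt_of_le_of_lt hsumned (Nat.lt_succ_self _))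
    rw [hPdef, coeff_sub, coeff_sub, key, key, hz]
    rw [hprod]
    ring
  have hdeg : natDegree P ≤ n + 1 := by
    rw [natDegree_le_iff_coeff_eq_zero]
    intro N hN
    rcases eq_or_lt_of_le (Nat.succ_le_of_lt hN) with h | h
    · rw [← h]; exact hcoeff
    · exact coeff_eq_zero_of_natDegree_lt (lt_of_le_of_lt hdeg1 h)
  -- evaluations
  have heval0 : P.eval 0 = 0 := by
    simp [hPdef, eval_prod]
  have hevali : ∀ i : Fin (n + 1), P.eval (x i)⁻¹ = 0 := by
    intro i
    have ha : x i ≠ 0 := hx0 i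
    have hD : (∏ s ∈ Finset.univ.erase i, (x i - x s)) ≠ 0 := by
      refine Finset.prod_ne_zero_iff.mpr fun s hs => sub_ne_zero.mpr fun h => ?_
      exact (Finset.mem_erase.mp hs).1 (hxinj h).symm
    have hx_zero : (∏ s, (1 - x s * (x i)⁻¹)) = 0 :=
      Finset.prod_eq_zero (Finset.mem_univ i) (by field_simp; simp)
    have hsum : (∑ j, c j * ∏ s ∈ Finset.univ.erase j, (1 - x s * (x i)⁻¹))
        = c i * ∏ s ∈ Finset.univ.erase i, (1 - x s * (x i)⁻¹) := by
      refine Finset.sum_eq_single_of_mem i (Finset.mem_univ i) fun j _ hj => ?_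
      have h0 : (∏ s ∈ Finset.univ.erase j, (1 - x s * (x i)⁻¹)) = 0 :=
        Finset.prod_eq_zero (Finset.mem_erase.mpr ⟨fun h => hj h.symm, Finset.mem_univ i⟩)
          (by field_simp; simp)
      simp [h0]
    have hrw : ∀ (t : Finset (Fin (n + 1))) (g : Fin (n + 1) → K),
        (∏ s ∈ t, (1 - g s * (x i)⁻¹)) = (x i)⁻¹ ^ t.card * ∏ s ∈ t, (x i - g s) := by
      intro t g
      rw [← Finset.prod_const, ← Finset.prod_mul_distrib]
      refine Finset.prod_congr rfl fun s _ => ?_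
      field_simp
    simp only [hPdef, eval_sub, eval_mul, eval_one, eval_prod, eval_C, eval_X,
      eval_finset_sum]
    rw [hx_zero, hsum, hrw Finset.univ u, hrw (Finset.univ.erase i) x,
      Finset.card_univ, Fintype.card_fin, hcard_erase i, hc]
    field_simp
    have hx1 : x i * (1 / x i) = 1 := mul_one_div_cancel ha
    linear_combination ((x i - u₀) * (1 / x i) ^ n * ∏ s, (x i - u s)) * hx1
  -- P = 0 via root counting
  have hP0 : P = 0 := by
    refine Polynomial.eq_zero_of_natDegree_lt_card_of_eval_eq_zero P
      (f := fun o : Option (Fin (n + 1)) => o.elim 0 fun i => (x i)⁻¹) ?_ ?_ ?_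
    · rintro (_ | a) (_ | b) h <;> simp only [Option.elim] at h
      · rfl
      · exact absurd h.symm (inv_ne_zero (hx0 b))
      · exact absurd h (inv_ne_zero (hx0 a))
      · exact congrArg _ (hxinj (by rw [← inv_inv (x a), h, inv_inv]))
    · rintro (_ | i)
      · exact heval0
      · exact hevali i
    · simpa using lt_of_le_of_lt hdeg (Nat.lt_succ_self (n + 1))
  -- conclude
  have hz := congrArg (Polynomial.eval z) hP0
  simp only [hPdef, eval_sub, eval_mul, eval_one, eval_prod, eval_C, eval_X,
    eval_finset_sum, eval_zero] at hz
  simp only [show ∀ a : K, 1 - a * z = 1 - z * a from fun a => by ring] at hz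
  linear_combination hz
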